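/- Let M ∈ ℝ^{n×n} be Hurwitz stable and W ∈ ℝ^{n×n} symmetric. Let X ∈ ℝ^{n×n} be symmetric and satisfy the Lyapunov inequality M X + X Mᵀ + W ⪯ 0 (i.e., −(MX + XMᵀ + W) is positive semidefinite), and let X₀ ∈ ℝ^{n×n} be symmetric and satisfy the Lyapunov equation M X₀ + X₀ Mᵀ + W = 0. Then X ⪰ X₀. -/

import Mathlib

open Matrix

noncomputable section

/-- A real square matrix is Hurwitz stable if every complex eigenvalue has negative real part. -/
def IsHurwitz {n : ℕ} (M : Matrix (Fin n) (Fin n) ℝ) : Prop :=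
  ∀ μ ∈ spectrum ℂ (M.map Complex.ofReal), μ.re < 0

section Aux

open Filter Topology NormedSpace

variable {n : ℕ}

attribute [local instance] Matrix.linftyOpNormedAddCommGroup Matrix.linftyOpNormedRing
  Matrix.linftyOpNormedAlgebra

def mulVecCLM (𝕜 : Type*) [NontriviallyNormedField 𝕜] [CompleteSpace 𝕜] (w : Fin n → 𝕜) :
    Matrix (Fin n) (Fin n) 𝕜 →L[𝕜] (Fin n → 𝕜) :=
  LinearMap.toContinuousLinearMap
    { toFun := (· *ᵥ w)
      map_add' := fun x y => Matrix.add_mulVec x y w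
      map_smul' := fun c x => Matrix.smul_mulVec c x w }

lemma exp_nilp_vec (B : Matrix (Fin n) (Fin n) ℂ) (t : ℝ) (w : Fin n → ℂ) (k : ℕ)
    (hB : B ^ k *ᵥ w = 0) :
    exp ((t : ℂ) • B) *ᵥ w
      = ∑ j ∈ Finset.range k, (((t : ℂ) ^ j) * ((j.factorial : ℂ)⁻¹)) • (B ^ j *ᵥ w) := by
  have hsum : Summable fun j : ℕ => ((j.factorial : ℂ)⁻¹) • ((t : ℂ) • B) ^ j :=
    expSeries_summable' (𝕂 := ℂ) ((t : ℂ) • B)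
  have h1 : exp ((t : ℂ) • B) *ᵥ w
      = ∑' j : ℕ, ((j.factorial : ℂ)⁻¹) • (((t : ℂ) • B) ^ j *ᵥ w) := by
    rw [exp_eq_tsum ℂ]
    have := (mulVecCLM ℂ w).map_tsum hsum
    simpa [mulVecCLM, Matrix.smul_mulVec] using this
  rw [h1, tsum_eq_sum (s := Finset.range k) ?_]
  · exact Finset.sum_congr rfl fun j hj => by
      rw [smul_pow, Matrix.smul_mulVec, smul_smul, mul_comm]
  · intro j hj
    have hjk : k ≤ j := by simpa using hj
    have : B ^ j *ᵥ w = 0 := by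
      have h2 : B ^ j = B ^ (j - k) * B ^ k := by rw [← pow_add]; congr 1; omega
      rw [h2, ← Matrix.mulVec_mulVec, hB, Matrix.mulVec_zero]
    rw [smul_pow, Matrix.smul_mulVec, this]
    simp

lemma scalar_decay (μ : ℂ) (hμ : μ.re < 0) (j : ℕ) :
    Tendsto (fun t : ℝ => Complex.exp ((t : ℂ) * μ) * (t : ℂ) ^ j) atTop (𝓝 0) := by
  rw [tendsto_zero_iff_norm_tendsto_zero]
  set b : ℝ := -μ.re with hb
  have hb0 : 0 < b := by simp [hb]; linarith
  have key : Tendsto (fun t : ℝ => t ^ j * Real.exp (t * μ.re)) atTop (𝓝 0) := by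
    have h1 : Tendsto (fun s : ℝ => (b⁻¹) ^ j * (s ^ j * Real.exp (-s))) atTop (𝓝 0) := by
      simpa using tendsto_const_nhds.mul (Real.tendsto_pow_mul_exp_neg_atTop_nhds_zero j)
    have h2 : Tendsto (fun t : ℝ => b * t) atTop atTop :=
      Tendsto.const_mul_atTop hb0 tendsto_id
    have := h1.comp h2
    refine this.congr fun t => ?_
    have : μ.re = -b := by simp [hb]
    rw [this]
    simp only [Function.comp_apply]
    field_simp
    rw [one_div, ← mul_pow, inv_mul_cancel_left₀ hb0.ne']
  refine squeeze_zero_norm' (a := fun t : ℝ => t ^ j * Real.exp (t * μ.re)) ?_ key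
  · filter_upwards [eventually_ge_atTop (0 : ℝ)] with t ht
    have : ‖Complex.exp ((t : ℂ) * μ) * (t : ℂ) ^ j‖ = Real.exp (t * μ.re) * |t| ^ j := by
      rw [norm_mul, Complex.norm_exp, norm_pow, Complex.norm_real,
        Real.norm_eq_abs]
      congr 2
      simp [Complex.mul_re]
    rw [this, abs_of_nonneg ht, Real.norm_eq_abs, abs_of_nonneg (by positivity), mul_comm]

lemma tendsto_exp_mulVec_zero (A : Matrix (Fin n) (Fin n) ℂ)
    (hA : ∀ μ ∈ spectrum ℂ A, μ.re < 0) (v : Fin n → ℂ) :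
    Tendsto (fun t : ℝ => exp ((t : ℂ) • A) *ᵥ v) atTop (𝓝 0) := by
  set S : Submodule ℂ (Fin n → ℂ) :=
    { carrier := {w | Tendsto (fun t : ℝ => exp ((t : ℂ) • A) *ᵥ w) atTop (𝓝 0)}
      add_mem' := fun {x y} hx hy => by
        have := hx.add hy
        simpa [Matrix.mulVec_add] using this
      zero_mem' := by simp [Matrix.mulVec_zero, tendsto_const_nhds]
      smul_mem' := fun c x hx => by
        have := hx.const_smul c
        simpa [Matrix.mulVec_smul] using this } with hS
  suffices h : ∀ w, w ∈ S from h v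
  have htop : ⊤ ≤ S := by
    set f := Matrix.toLinAlgEquiv' A with hf
    rw [← Module.End.iSup_maxGenEigenspace_eq_top (f : Module.End ℂ (Fin n → ℂ))]
    refine iSup_le fun μ => ?_
    intro w hw
    rw [Module.End.mem_maxGenEigenspace] at hw
    obtain ⟨k, hk⟩ := hw
    -- translate to matrices
    have hkm : (A - μ • 1) ^ k *ᵥ w = 0 := by
      have h3 : Matrix.toLinAlgEquiv' ((A - μ • 1) ^ k) = (f - μ • 1) ^ k := by
        rw [map_pow, map_sub, hf]
        congr 2
        rw [← Algebra.algebraMap_eq_smul_one, ← Algebra.algebraMap_eq_smul_one]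
        exact AlgEquiv.commutes _ μ
      rw [← h3, Matrix.toLinAlgEquiv'_apply] at hk
      exact hk
    by_cases hs : μ ∈ spectrum ℂ A
    · -- decaying case
      have hμ : μ.re < 0 := hA μ hs
      show Tendsto _ atTop (𝓝 0)
      have key : ∀ t : ℝ, exp ((t : ℂ) • A) *ᵥ w
          = ∑ j ∈ Finset.range k,
              (Complex.exp ((t : ℂ) * μ) * (t : ℂ) ^ j) •
                (((j.factorial : ℂ)⁻¹) • ((A - μ • 1) ^ j *ᵥ w)) := by
        intro t
        have hsplit : (t : ℂ) • A = ((t : ℂ) * μ) • (1 : Matrix (Fin n) (Fin n) ℂ)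
            + (t : ℂ) • (A - μ • 1) := by
          rw [smul_sub, smul_smul]
          abel
        have hcomm : Commute (((t : ℂ) * μ) • (1 : Matrix (Fin n) (Fin n) ℂ))
            ((t : ℂ) • (A - μ • 1)) := (Commute.one_left _).smul_left _ |>.smul_right _
        rw [hsplit, Matrix.exp_add_of_commute _ _ hcomm]
        have hscal : exp (((t : ℂ) * μ) • (1 : Matrix (Fin n) (Fin n) ℂ))
            = Complex.exp ((t : ℂ) * μ) • (1 : Matrix (Fin n) (Fin n) ℂ) := by
          rw [← Algebra.algebraMap_eq_smul_one]
          erw [← algebraMap_exp_comm]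
          rw [Algebra.algebraMap_eq_smul_one, Complex.exp_eq_exp_ℂ]
        rw [hscal, ← Matrix.mulVec_mulVec, exp_nilp_vec _ _ _ _ hkm,
          Matrix.smul_mulVec, Matrix.one_mulVec, Finset.smul_sum]
        refine Finset.sum_congr rfl fun j _ => ?_
        simp only [smul_smul]
        congr 1
        ring
      have : Tendsto (fun t : ℝ => ∑ j ∈ Finset.range k,
          (Complex.exp ((t : ℂ) * μ) * (t : ℂ) ^ j) •
            (((j.factorial : ℂ)⁻¹) • ((A - μ • 1) ^ j *ᵥ w))) atTop (𝓝 0) := by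
        have : (0 : Fin n → ℂ) = ∑ j ∈ Finset.range k, (0 : Fin n → ℂ) := by simp
        rw [this]
        refine tendsto_finset_sum _ fun j _ => ?_
        have := (scalar_decay μ hμ j).smul_const
          (((j.factorial : ℂ)⁻¹) • ((A - μ • 1) ^ j *ᵥ w))
        simpa using this
      exact (Tendsto.congr (fun t => (key t).symm) this)
    · -- w = 0 case
      have hunit : IsUnit ((algebraMap ℂ (Matrix (Fin n) (Fin n) ℂ)) μ - A) :=
        spectrum.notMem_iff.mp hs
      have hw0 : w = 0 := by
        have hunit' : IsUnit (((algebraMap ℂ (Matrix (Fin n) (Fin n) ℂ)) μ - A) ^ k) :=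
          hunit.pow k
        obtain ⟨u, hu⟩ := hunit'
        have h1 : ((algebraMap ℂ (Matrix (Fin n) (Fin n) ℂ)) μ - A) ^ k *ᵥ w = 0 := by
          have heq : (algebraMap ℂ (Matrix (Fin n) (Fin n) ℂ)) μ - A = -(A - μ • 1) := by
            rw [Algebra.algebraMap_eq_smul_one, neg_sub]
          rw [heq, neg_pow, ← Matrix.mulVec_mulVec, hkm, Matrix.mulVec_zero]
        have h2 : (↑u : Matrix (Fin n) (Fin n) ℂ) *ᵥ w = 0 := by rw [hu]; exact h1
        have h4 : (((u⁻¹ : (Matrix (Fin n) (Fin n) ℂ)ˣ) : Matrix (Fin n) (Fin n) ℂ)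
            * (u : Matrix (Fin n) (Fin n) ℂ)) *ᵥ w = 0 := by
          rw [← Matrix.mulVec_mulVec, h2, Matrix.mulVec_zero]
        rw [Units.inv_mul, Matrix.one_mulVec] at h4
        exact h4
      rw [hw0]
      exact S.zero_mem
  exact fun w => htop (Submodule.mem_top)

lemma tendsto_exp_matrix_complex (A : Matrix (Fin n) (Fin n) ℂ)
    (hA : ∀ μ ∈ spectrum ℂ A, μ.re < 0) :
    Tendsto (fun t : ℝ => exp ((t : ℂ) • A)) atTop (𝓝 0) := by
  have hcol : ∀ j, Tendsto (fun t : ℝ => exp ((t : ℂ) • A) *ᵥ Pi.single j 1) atTop (𝓝 0) :=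
    fun j => tendsto_exp_mulVec_zero A hA _
  have hentry : ∀ i j, Tendsto (fun t : ℝ => exp ((t : ℂ) • A) i j) atTop (𝓝 0) := by
    intro i j
    have := (tendsto_pi_nhds.mp (hcol j)) i
    simpa [Matrix.mulVec_single] using this
  have hrw : ∀ t : ℝ, exp ((t : ℂ) • A)
      = ∑ i : Fin n, ∑ j : Fin n, (exp ((t : ℂ) • A) i j) • Matrix.single i j (1 : ℂ) := by
    intro t
    conv_lhs => rw [matrix_eq_sum_single (exp ((t : ℂ) • A))]
    refine Finset.sum_congr rfl fun i _ => Finset.sum_congr rfl fun j _ => ?_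
    rw [Matrix.smul_single, smul_eq_mul, mul_one]
  rw [show (0 : Matrix (Fin n) (Fin n) ℂ)
      = ∑ i : Fin n, ∑ j : Fin n, (0 : Matrix (Fin n) (Fin n) ℂ) by simp]
  refine Tendsto.congr (fun t => (hrw t).symm) ?_
  refine tendsto_finset_sum _ fun i _ => tendsto_finset_sum _ fun j _ => ?_
  simpa using (hentry i j).smul_const (Matrix.single i j (1 : ℂ))

lemma tendsto_exp_real (M : Matrix (Fin n) (Fin n) ℝ) (hM : IsHurwitz M) :
    Tendsto (fun t : ℝ => exp (t • M)) atTop (𝓝 0) := by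
  set A : Matrix (Fin n) (Fin n) ℂ := M.map Complex.ofReal with hA
  set φ : Matrix (Fin n) (Fin n) ℝ →ₐ[ℝ] Matrix (Fin n) (Fin n) ℂ :=
    (Complex.ofRealAm.mapMatrix) with hφ
  have hφcont : Continuous φ := φ.toLinearMap.continuous_of_finiteDimensional
  have hmap : ∀ t : ℝ, φ (exp (t • M)) = exp ((t : ℂ) • A) := by
    intro t
    erw [map_exp φ hφcont]
    rw [_root_.map_smul]
    have h1 : φ M = A := by
      rw [hφ, AlgHom.mapMatrix_apply, hA]
      rfl
    rw [h1]
    have h2 : (t : ℂ) • A = t • A := by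
      rw [← Complex.coe_algebraMap, algebraMap_smul]
    rw [h2]
    rfl
  have hC : Tendsto (fun t : ℝ => exp ((t : ℂ) • A)) atTop (𝓝 0) :=
    tendsto_exp_matrix_complex A (by rw [← hA] at *; exact hM)
  have hentry : ∀ i j, Tendsto (fun t : ℝ => exp (t • M) i j) atTop (𝓝 0) := by
    intro i j
    have h3 : ∀ t : ℝ, exp (t • M) i j = (exp ((t : ℂ) • A) i j).re := by
      intro t
      rw [← hmap t, hφ, AlgHom.mapMatrix_apply]
      simp [Matrix.map_apply]
    have h4 : Tendsto (fun t : ℝ => (exp ((t : ℂ) • A) i j).re) atTop (𝓝 0) := by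
      have hij : Tendsto (fun t : ℝ => exp ((t : ℂ) • A) i j) atTop (𝓝 0) := by
        have := tendsto_pi_nhds.mp (tendsto_pi_nhds.mp hC i) j
        simpa using this
      have h5 := (Complex.continuous_re.tendsto 0).comp hij
      rw [Complex.zero_re] at h5
      exact h5
    exact Tendsto.congr (fun t => (h3 t).symm) h4
  have hrw : ∀ t : ℝ, exp (t • M)
      = ∑ i : Fin n, ∑ j : Fin n, (exp (t • M) i j) • Matrix.single i j (1 : ℝ) := by
    intro t
    conv_lhs => rw [matrix_eq_sum_single (exp (t • M))]
    refine Finset.sum_congr rfl fun i _ => Finset.sum_congr rfl fun j _ => ?_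
    rw [Matrix.smul_single, smul_eq_mul, mul_one]
  rw [show (0 : Matrix (Fin n) (Fin n) ℝ)
      = ∑ i : Fin n, ∑ j : Fin n, (0 : Matrix (Fin n) (Fin n) ℝ) by simp]
  refine Tendsto.congr (fun t => (hrw t).symm) ?_
  refine tendsto_finset_sum _ fun i _ => tendsto_finset_sum _ fun j _ => ?_
  simpa using (hentry i j).smul_const (Matrix.single i j (1 : ℝ))

def entryMulVecCLM (v : Fin n → ℝ) (i : Fin n) : Matrix (Fin n) (Fin n) ℝ →L[ℝ] ℝ :=
  LinearMap.toContinuousLinearMap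
    { toFun := fun B => (B *ᵥ v) i
      map_add' := fun x y => by simp [Matrix.add_mulVec]
      map_smul' := fun c x => by simp [Matrix.smul_mulVec] }

def transpMulVecCLM (v : Fin n → ℝ) : Matrix (Fin n) (Fin n) ℝ →L[ℝ] (Fin n → ℝ) :=
  LinearMap.toContinuousLinearMap
    { toFun := fun B => Bᵀ *ᵥ v
      map_add' := fun x y => by simp [Matrix.transpose_add, Matrix.add_mulVec]
      map_smul' := fun c x => by simp [Matrix.transpose_smul, Matrix.smul_mulVec] }

end Aux

section Main
open Filter Topology NormedSpace
attribute [local instance] Matrix.linftyOpNormedAddCommGroup Matrix.linftyOpNormedRing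
  Matrix.linftyOpNormedAlgebra

/-- Comparison lemma for the continuous-time Lyapunov inequality. -/
theorem stmt_14 {n : ℕ}
    (M W X X₀ : Matrix (Fin n) (Fin n) ℝ)
    (hM : IsHurwitz M) (hW : W.IsHermitian)
    (hX : X.IsHermitian)
    (hXineq : (-(M * X + X * Mᵀ + W)).PosSemidef)
    (hX₀ : X₀.IsHermitian)
    (hX₀eq : M * X₀ + X₀ * Mᵀ + W = 0) :
    (X - X₀).PosSemidef := by
  refine Matrix.PosSemidef.of_dotProduct_mulVec_nonneg (hX.sub hX₀) fun v => ?_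
  set Δ : Matrix (Fin n) (Fin n) ℝ := X - X₀ with hΔ
  set Q : Matrix (Fin n) (Fin n) ℝ := -(M * X + X * Mᵀ + W) with hQ
  have hMΔ : M * Δ + Δ * Mᵀ = -Q := by
    have h0 : M * X₀ + X₀ * Mᵀ = -W := eq_neg_of_add_eq_zero_left hX₀eq
    rw [hΔ, hQ, neg_neg, mul_sub, sub_mul]
    have h1 : M * X - M * X₀ + (X * Mᵀ - X₀ * Mᵀ)
        = (M * X + X * Mᵀ) - (M * X₀ + X₀ * Mᵀ) := by abel
    rw [h1, h0, sub_neg_eq_add, add_assoc]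
  -- the flow
  set u : ℝ → (Fin n → ℝ) := fun t => exp (t • Mᵀ) *ᵥ v with hu
  have hu' : ∀ (t : ℝ) (i : Fin n), HasDerivAt (fun s => u s i) ((Mᵀ *ᵥ u t) i) t := by
    intro t i
    have hD := hasDerivAt_exp_smul_const' (𝕂 := ℝ) Mᵀ t
    have := (entryMulVecCLM v i).hasFDerivAt.comp_hasDerivAt t hD
    show HasDerivAt _ ((Mᵀ *ᵥ (exp (t • Mᵀ) *ᵥ v)) i) t
    rw [Matrix.mulVec_mulVec]
    exact this
  set g : ℝ → ℝ := fun t => u t ⬝ᵥ (Δ *ᵥ u t) with hg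
  have hgD : ∀ t, HasDerivAt g
      ((Mᵀ *ᵥ u t) ⬝ᵥ (Δ *ᵥ u t) + u t ⬝ᵥ (Δ *ᵥ (Mᵀ *ᵥ u t))) t := by
    intro t
    have hw : ∀ i, HasDerivAt (fun s => (Δ *ᵥ u s) i) ((Δ *ᵥ (Mᵀ *ᵥ u t)) i) t := by
      intro i
      have : ∀ s, (Δ *ᵥ u s) i = ∑ j, Δ i j * u s j := fun s => rfl
      simp only [this, Matrix.mulVec, dotProduct]
      exact HasDerivAt.fun_sum fun j _ => (hu' t j).const_mul (Δ i j)
    have hsum := HasDerivAt.fun_sum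
      (fun i (_ : i ∈ Finset.univ) => ((hu' t i).fun_mul (hw i)))
    have hgeq : g = fun s => ∑ i, u s i * (Δ *ᵥ u s) i := rfl
    rw [hgeq]
    refine hsum.congr_deriv ?_
    simp [dotProduct, Finset.sum_add_distrib]
  have hg'le : ∀ t,
      (Mᵀ *ᵥ u t) ⬝ᵥ (Δ *ᵥ u t) + u t ⬝ᵥ (Δ *ᵥ (Mᵀ *ᵥ u t)) ≤ 0 := by
    intro t
    have key : (Mᵀ *ᵥ u t) ⬝ᵥ (Δ *ᵥ u t) + u t ⬝ᵥ (Δ *ᵥ (Mᵀ *ᵥ u t))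
        = u t ⬝ᵥ ((M * Δ + Δ * Mᵀ) *ᵥ u t) := by
      rw [Matrix.add_mulVec, dotProduct_add]
      congr 1
      · rw [Matrix.mulVec_transpose, ← dotProduct_mulVec, Matrix.mulVec_mulVec]
      · rw [← Matrix.mulVec_mulVec]
    rw [key, hMΔ, Matrix.neg_mulVec, dotProduct_neg]
    have hpos := hXineq.dotProduct_mulVec_nonneg (u t)
    rw [star_trivial] at hpos
    linarith
  have hanti : Antitone g :=
    antitone_of_deriv_nonpos (fun t => (hgD t).differentiableAt)
      (fun t => by rw [(hgD t).deriv]; exact hg'le t)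
  have hu0 : Tendsto u atTop (𝓝 0) := by
    have hEt : Tendsto (fun t : ℝ => exp (t • M)) atTop (𝓝 0) := tendsto_exp_real M hM
    have := ((transpMulVecCLM v).continuous.tendsto 0).comp hEt
    refine Tendsto.congr (fun t => ?_) (by simpa [transpMulVecCLM] using this)
    simp only [hu, Function.comp, transpMulVecCLM, LinearMap.coe_toContinuousLinearMap',
      LinearMap.coe_mk, AddHom.coe_mk]
    rw [← Matrix.exp_transpose, ← Matrix.transpose_smul]
  have hui : ∀ i, Tendsto (fun t => u t i) atTop (𝓝 0) := by
    intro i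
    simpa using tendsto_pi_nhds.mp hu0 i
  have hwi : ∀ i, Tendsto (fun t => (Δ *ᵥ u t) i) atTop (𝓝 0) := by
    intro i
    have h2 : Tendsto (fun t => ∑ j, Δ i j * u t j) atTop (𝓝 (∑ j : Fin n, Δ i j * 0)) :=
      tendsto_finset_sum _ fun j _ => tendsto_const_nhds.mul (hui j)
    simpa [Matrix.mulVec, dotProduct] using h2
  have hg0 : Tendsto g atTop (𝓝 0) := by
    have h3 : Tendsto (fun t => ∑ i, u t i * (Δ *ᵥ u t) i) atTop (𝓝 (∑ i : Fin n, 0 * 0)) :=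
      tendsto_finset_sum _ fun i _ => (hui i).mul (hwi i)
    simpa [hg, dotProduct] using h3
  have h00 : 0 ≤ g 0 := by
    refine le_of_tendsto hg0 ?_
    filter_upwards [eventually_ge_atTop (0 : ℝ)] with t ht
    exact hanti ht
  have hg00 : g 0 = v ⬝ᵥ (Δ *ᵥ v) := by
    simp [hg, hu, zero_smul, exp_zero, Matrix.one_mulVec]
  have hsv : star v = v := star_trivial v
  rw [hsv, ← hg00]
  exact h00

end Main
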